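/- Let h₁, k₁, h₂, k₂ ∈ ℝ and let M be the 2×2 real matrix with rows (h₁, k₁) and (h₂, k₂). For φ ∈ L²([0,1]; ℝ²) define B(φ) = ∫_0^1 φ(t) · (M ∫_0^t φ(s) ds) dt. Then: (i) B((1,0)) = h₁/2 and B((0,1)) = k₂/2, where (1,0) and (0,1) denote the corresponding constant functions on [0,1]; (ii) for every integer n ≥ 1, B(√2(cos(2πnt), 0)) = B(√2(sin(2πnt), 0)) = B(√2(0, cos(2πnt))) = B(√2(0, sin(2πnt))) = 0. Consequently, for the orthonormal basis {ψ_i} of L²([0,1]; ℝ²) consisting of these functions, the series Σ_i B(ψ_i) converges to (h₁ + k₂)/2, i.e. to one half of the divergence ∇·α of the linear vector field α(x,y) = (h₁x + k₁y, h₂x + k₂y). -/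

import Mathlib

open MeasureTheory Real Matrix intervalIntegral

lemma vecInt' (f g : ℝ → ℝ) (hf : Continuous f) (hg : Continuous g) (a b : ℝ) :
    (∫ s in a..b, (![f s, g s] : Fin 2 → ℝ)) = ![∫ s in a..b, f s, ∫ s in a..b, g s] := by
  have hc : Continuous (fun s => (![f s, g s] : Fin 2 → ℝ)) := by
    apply continuous_pi
    intro i
    fin_cases i <;> simpa
  have hint : IntervalIntegrable (fun s => (![f s, g s] : Fin 2 → ℝ)) volume a b :=
    hc.intervalIntegrable a b
  funext i
  have h := (ContinuousLinearMap.proj (R := ℝ) (φ := fun _ : Fin 2 => ℝ) i).intervalIntegral_comp_comm hint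
  fin_cases i <;> simpa using h.symm

lemma scalarInt (c : ℝ) (f : ℝ → ℝ) (hf : Continuous f) :
    (∫ t in (0:ℝ)..1, c * (f t * ∫ s in (0:ℝ)..t, f s))
      = c * (∫ s in (0:ℝ)..1, f s)^2 / 2 := by
  set F : ℝ → ℝ := fun t => ∫ s in (0:ℝ)..t, f s with hF
  have hFd : ∀ t : ℝ, HasDerivAt F (f t) t := by
    intro t
    exact intervalIntegral.integral_hasDerivAt_right (hf.intervalIntegrable 0 t)
      (hf.stronglyMeasurableAtFilter _ _) hf.continuousAt
  have hFc : Continuous F := by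
    apply continuous_iff_continuousAt.mpr
    exact fun t => (hFd t).continuousAt
  have hderiv : ∀ t ∈ Set.uIcc (0:ℝ) 1,
      HasDerivAt (fun t => c * (F t)^2 / 2) (c * (f t * F t)) t := by
    intro t _
    have := ((hFd t).pow 2).const_mul c |>.div_const 2
    refine this.congr_deriv ?_
    push_cast
    ring
  have hintg : IntervalIntegrable (fun t => c * (f t * F t)) volume 0 1 :=
    (continuous_const.mul (hf.mul hFc)).intervalIntegrable 0 1
  have := intervalIntegral.integral_eq_sub_of_hasDerivAt hderiv hintg
  rw [this]
  have hF0 : F 0 = 0 := by simp [hF]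
  rw [hF0]
  ring

lemma Bfirst (h₁ k₁ h₂ k₂ : ℝ) (f : ℝ → ℝ) (hf : Continuous f) :
    (∫ t in (0:ℝ)..1, (![f t, 0] : Fin 2 → ℝ) ⬝ᵥ
        (!![h₁, k₁; h₂, k₂]).mulVec (∫ s in (0:ℝ)..t, (![f s, 0] : Fin 2 → ℝ)))
      = h₁ * (∫ s in (0:ℝ)..1, f s)^2 / 2 := by
  have hv : ∀ t : ℝ, (∫ s in (0:ℝ)..t, (![f s, 0] : Fin 2 → ℝ))
      = ![∫ s in (0:ℝ)..t, f s, 0] := by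
    intro t
    simpa using vecInt' f (fun _ => 0) hf continuous_const 0 t
  rw [show (∫ t in (0:ℝ)..1, (![f t, 0] : Fin 2 → ℝ) ⬝ᵥ
        (!![h₁, k₁; h₂, k₂]).mulVec (∫ s in (0:ℝ)..t, (![f s, 0] : Fin 2 → ℝ)))
      = ∫ t in (0:ℝ)..1, h₁ * (f t * ∫ s in (0:ℝ)..t, f s) from by
    apply intervalIntegral.integral_congr
    intro t _
    simp only [hv]
    simp [Matrix.mulVec, dotProduct]
    ring]
  exact scalarInt h₁ f hf

lemma Bsecond (h₁ k₁ h₂ k₂ : ℝ) (f : ℝ → ℝ) (hf : Continuous f) :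
    (∫ t in (0:ℝ)..1, (![0, f t] : Fin 2 → ℝ) ⬝ᵥ
        (!![h₁, k₁; h₂, k₂]).mulVec (∫ s in (0:ℝ)..t, (![0, f s] : Fin 2 → ℝ)))
      = k₂ * (∫ s in (0:ℝ)..1, f s)^2 / 2 := by
  have hv : ∀ t : ℝ, (∫ s in (0:ℝ)..t, (![0, f s] : Fin 2 → ℝ))
      = ![0, ∫ s in (0:ℝ)..t, f s] := by
    intro t
    simpa using vecInt' (fun _ => 0) f continuous_const hf 0 t
  rw [show (∫ t in (0:ℝ)..1, (![0, f t] : Fin 2 → ℝ) ⬝ᵥ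
        (!![h₁, k₁; h₂, k₂]).mulVec (∫ s in (0:ℝ)..t, (![0, f s] : Fin 2 → ℝ)))
      = ∫ t in (0:ℝ)..1, k₂ * (f t * ∫ s in (0:ℝ)..t, f s) from by
    apply intervalIntegral.integral_congr
    intro t _
    simp only [hv]
    simp [Matrix.mulVec, dotProduct]
    ring]
  exact scalarInt k₂ f hf

lemma cosInt (m : ℕ) (hm : 1 ≤ m) :
    (∫ s in (0:ℝ)..1, Real.sqrt 2 * Real.cos (2 * π * (m : ℝ) * s)) = 0 := by
  have hc : (2 * π * (m : ℝ)) ≠ 0 := by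
    have : (0:ℝ) < m := by exact_mod_cast hm
    positivity
  have hs : Real.sin (2 * π * (m : ℝ)) = 0 := by
    have := Real.sin_nat_mul_pi (2 * m)
    push_cast at this
    rw [show 2 * π * (m : ℝ) = 2 * (m : ℝ) * π by ring]
    exact this
  rw [intervalIntegral.integral_const_mul]
  have := intervalIntegral.integral_comp_mul_left (a := (0:ℝ)) (b := 1)
    (f := Real.cos) hc
  simp only [mul_zero, mul_one] at this
  rw [this, integral_cos]
  simp [hs]

lemma sinInt (m : ℕ) (hm : 1 ≤ m) :
    (∫ s in (0:ℝ)..1, Real.sqrt 2 * Real.sin (2 * π * (m : ℝ) * s)) = 0 := by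
  have hc : (2 * π * (m : ℝ)) ≠ 0 := by
    have : (0:ℝ) < m := by exact_mod_cast hm
    positivity
  have hcos : Real.cos (2 * π * (m : ℝ)) = 1 := by
    have := Real.cos_nat_mul_two_pi m
    rw [show 2 * π * (m : ℝ) = (m : ℝ) * (2 * π) by ring]
    exact this
  rw [intervalIntegral.integral_const_mul]
  have := intervalIntegral.integral_comp_mul_left (a := (0:ℝ)) (b := 1)
    (f := Real.sin) hc
  simp only [mul_zero, mul_one] at this
  rw [this, integral_sin]
  simp [hcos]

/-- With `M = !![h₁, k₁; h₂, k₂]` and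
`B(φ) = ∫_0^1 φ(t) · (M ∫_0^t φ(s) ds) dt` on `L²([0,1]; ℝ²)`: (i) `B((1,0)) = h₁/2` and
`B((0,1)) = k₂/2`; (ii) for every `n ≥ 1`, `B` vanishes on the normalized trigonometric
functions `√2(cos 2πnt, 0)`, `√2(sin 2πnt, 0)`, `√2(0, cos 2πnt)`, `√2(0, sin 2πnt)`;
consequently for the orthonormal basis `{ψ_i}` consisting of these functions the series
`Σ_i B(ψ_i)` converges to `(h₁ + k₂)/2`, one half of the divergence of the linear vector field
`α(x,y) = (h₁x + k₁y, h₂x + k₂y)`. -/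
theorem statement8 (h₁ k₁ h₂ k₂ : ℝ)
    (M : Matrix (Fin 2) (Fin 2) ℝ) (hM : M = !![h₁, k₁; h₂, k₂])
    (B : (ℝ → Fin 2 → ℝ) → ℝ)
    (hB : ∀ φ : ℝ → Fin 2 → ℝ,
      B φ = ∫ t in (0:ℝ)..1, φ t ⬝ᵥ M.mulVec (∫ s in (0:ℝ)..t, φ s))
    (ψ : (Fin 2 ⊕ ℕ × Fin 4) → ℝ → Fin 2 → ℝ)
    (hψ0 : ψ (Sum.inl 0) = fun _ => ![1, 0])
    (hψ1 : ψ (Sum.inl 1) = fun _ => ![0, 1])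
    (hψa : ∀ n : ℕ, ψ (Sum.inr (n, 0))
      = fun t => ![Real.sqrt 2 * Real.cos (2 * π * ((n : ℝ) + 1) * t), 0])
    (hψb : ∀ n : ℕ, ψ (Sum.inr (n, 1))
      = fun t => ![Real.sqrt 2 * Real.sin (2 * π * ((n : ℝ) + 1) * t), 0])
    (hψc : ∀ n : ℕ, ψ (Sum.inr (n, 2))
      = fun t => ![0, Real.sqrt 2 * Real.cos (2 * π * ((n : ℝ) + 1) * t)])
    (hψd : ∀ n : ℕ, ψ (Sum.inr (n, 3))
      = fun t => ![0, Real.sqrt 2 * Real.sin (2 * π * ((n : ℝ) + 1) * t)]) :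
    B (fun _ => ![1, 0]) = h₁ / 2 ∧
    B (fun _ => ![0, 1]) = k₂ / 2 ∧
    (∀ n : ℕ, 1 ≤ n →
      B (fun t => ![Real.sqrt 2 * Real.cos (2 * π * (n : ℝ) * t), 0]) = 0 ∧
      B (fun t => ![Real.sqrt 2 * Real.sin (2 * π * (n : ℝ) * t), 0]) = 0 ∧
      B (fun t => ![0, Real.sqrt 2 * Real.cos (2 * π * (n : ℝ) * t)]) = 0 ∧
      B (fun t => ![0, Real.sqrt 2 * Real.sin (2 * π * (n : ℝ) * t)]) = 0) ∧
    HasSum (fun i => B (ψ i)) ((h₁ + k₂) / 2) := by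
  subst hM
  have hcosC : ∀ n : ℕ, Continuous (fun t : ℝ => Real.sqrt 2 * Real.cos (2 * π * (n : ℝ) * t)) := by
    intro n; fun_prop
  have hsinC : ∀ n : ℕ, Continuous (fun t : ℝ => Real.sqrt 2 * Real.sin (2 * π * (n : ℝ) * t)) := by
    intro n; fun_prop
  have e1 : B (fun _ => ![1, 0]) = h₁ / 2 := by
    rw [hB]
    rw [Bfirst h₁ k₁ h₂ k₂ (fun _ => 1) continuous_const]
    simp
  have e2 : B (fun _ => ![0, 1]) = k₂ / 2 := by
    rw [hB]
    rw [Bsecond h₁ k₁ h₂ k₂ (fun _ => 1) continuous_const]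
    simp
  have etrig : ∀ n : ℕ, 1 ≤ n →
      B (fun t => ![Real.sqrt 2 * Real.cos (2 * π * (n : ℝ) * t), 0]) = 0 ∧
      B (fun t => ![Real.sqrt 2 * Real.sin (2 * π * (n : ℝ) * t), 0]) = 0 ∧
      B (fun t => ![0, Real.sqrt 2 * Real.cos (2 * π * (n : ℝ) * t)]) = 0 ∧
      B (fun t => ![0, Real.sqrt 2 * Real.sin (2 * π * (n : ℝ) * t)]) = 0 := by
    intro n hn
    refine ⟨?_, ?_, ?_, ?_⟩
    · rw [hB, Bfirst h₁ k₁ h₂ k₂ _ (hcosC n), cosInt n hn]; ring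
    · rw [hB, Bfirst h₁ k₁ h₂ k₂ _ (hsinC n), sinInt n hn]; ring
    · rw [hB, Bsecond h₁ k₁ h₂ k₂ _ (hcosC n), cosInt n hn]; ring
    · rw [hB, Bsecond h₁ k₁ h₂ k₂ _ (hsinC n), sinInt n hn]; ring
  refine ⟨e1, e2, etrig, ?_⟩
  have hzero : ∀ b ∉ ({Sum.inl 0, Sum.inl 1} : Finset (Fin 2 ⊕ ℕ × Fin 4)),
      B (ψ b) = 0 := by
    intro b hb
    rcases b with i | ⟨n, j⟩
    · exfalso
      fin_cases i <;> simp at hb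
    · have hn1 : 1 ≤ n + 1 := Nat.succ_le_succ (Nat.zero_le n)
      have hcast : ((n : ℝ) + 1) = ((n + 1 : ℕ) : ℝ) := by push_cast; ring
      obtain ⟨z1, z2, z3, z4⟩ := etrig (n + 1) hn1
      have hj : j = 0 ∨ j = 1 ∨ j = 2 ∨ j = 3 := by omega
      rcases hj with rfl | rfl | rfl | rfl
      · rw [hψa n]; rw [hcast]; exact z1
      · rw [hψb n]; rw [hcast]; exact z2
      · rw [hψc n]; rw [hcast]; exact z3
      · rw [hψd n]; rw [hcast]; exact z4
  have hsum := hasSum_sum_of_ne_finset_zero (f := fun i => B (ψ i)) (L := SummationFilter.unconditional _) hzero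
  have hne : (Sum.inl 0 : Fin 2 ⊕ ℕ × Fin 4) ≠ Sum.inl 1 := by simp
  rw [Finset.sum_pair hne] at hsum
  rw [hψ0, hψ1, e1, e2] at hsum
  convert hsum using 1
  ring
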